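/- Let c > 0 and let D_i ⊂ ℝⁿ be bounded measurable sets with |B_r(x) ∩ D_i| > c rⁿ for all x ∈ ∂D_i and 0 < r < diam(D_i), and suppose χ_{D_i} → χ_D in L¹(ℝⁿ). Then for every ε > 0 there is N such that for all i > N, D is contained in the open ε-neighborhood of D_i. -/
import Mathlib


open MeasureTheory Metric Set Filter
open scoped ENNReal Topology

/-- If `D_i ∈ 𝒟_c` (lower volume density `c` at boundary points) and `χ_{D_i} → χ_D`
in `L¹`, where `D` is normalized so that `|D ∩ B_r(x)| > 0` for all `x ∈ D`, `r > 0`,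
then for every `ε > 0`, eventually `D` is contained in the `ε`-neighborhood of `D_i`. -/
theorem stmt_7 {n : ℕ} (c : ℝ) (hc : 0 < c)
    (D : ℕ → Set (EuclideanSpace ℝ (Fin n))) (D₀ : Set (EuclideanSpace ℝ (Fin n)))
    (hDm : ∀ i, MeasurableSet (D i)) (hDb : ∀ i, Bornology.IsBounded (D i))
    (hD₀m : MeasurableSet D₀) (hD₀b : Bornology.IsBounded D₀)
    (hdens : ∀ i, ∀ x ∈ frontier (D i), ∀ r : ℝ, 0 < r → r < diam (D i) →
      ENNReal.ofReal (c * r ^ n) < volume (ball x r ∩ D i))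
    (hconv : Tendsto (fun i => volume (symmDiff (D i) D₀)) atTop (nhds 0))
    (hrep : ∀ x ∈ D₀, ∀ r : ℝ, 0 < r → 0 < volume (D₀ ∩ ball x r)) :
    ∀ ε : ℝ, 0 < ε → ∃ N : ℕ, ∀ i > N, D₀ ⊆ Metric.thickening ε (D i) := by
  intro ε hε
  have hε2 : 0 < ε / 2 := by positivity
  -- cover closure of D₀ by balls of radius ε/2 centered in D₀
  have hK : IsCompact (closure D₀) := hD₀b.isCompact_closure
  have hcov : closure D₀ ⊆ ⋃ x ∈ D₀, ball x (ε / 2) := by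
    intro y hy
    rcases Metric.mem_closure_iff.mp hy (ε / 2) hε2 with ⟨x, hx, hd⟩
    exact mem_biUnion hx (by simpa [mem_ball, dist_comm] using hd)
  obtain ⟨t, htD, htfin, htcov⟩ :=
    hK.elim_finite_subcover_image (fun x _ => isOpen_ball) hcov
  -- eventually volume of symmDiff is smaller than each ball mass
  have hev : ∀ᶠ i in atTop, ∀ x ∈ t,
      volume (symmDiff (D i) D₀) < volume (D₀ ∩ ball x (ε / 2)) := by
    rw [eventually_all_finite htfin]
    intro x hx
    exact hconv.eventually_lt_const (hrep x (htD hx) (ε / 2) hε2)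
  obtain ⟨N, hN⟩ := eventually_atTop.mp hev
  refine ⟨N, fun i hi x hx => ?_⟩
  have hxK : x ∈ ⋃ y ∈ t, ball y (ε / 2) := htcov (subset_closure hx)
  rcases mem_iUnion₂.mp hxK with ⟨y, hy, hxy⟩
  -- D i meets ball y (ε/2)
  have hne : (D i ∩ ball y (ε / 2)).Nonempty := by
    by_contra hemp
    have hsub : D₀ ∩ ball y (ε / 2) ⊆ symmDiff (D i) D₀ := by
      intro z hz
      rw [Set.mem_symmDiff]
      refine Or.inr ⟨hz.1, fun hzD => ?_⟩
      exact hemp ⟨z, hzD, hz.2⟩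
    exact absurd (measure_mono hsub)
      (not_le.mpr (hN i (le_of_lt hi) y hy))
  rcases hne with ⟨z, hzD, hzy⟩
  rw [Metric.mem_thickening_iff]
  refine ⟨z, hzD, ?_⟩
  calc dist x z ≤ dist x y + dist y z := dist_triangle x y z
    _ < ε / 2 + ε / 2 := by
        have := mem_ball.mp hzy
        rw [dist_comm y z]
        exact add_lt_add (mem_ball.mp hxy) this
    _ = ε := by ring
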